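/- Assume b·c + a·d < 2·a·b. Then the set S = { s ≥ 1 : there exists a positive integer ℓ with c·s ≤ a·ℓ and b·ℓ ≤ (2b − d)·s } is nonempty, and, with r the least element of S, there exists a positive integer ℓ with c·r ≤ a·ℓ and b·ℓ ≤ (2b − d)·r such that, setting i = ℓ/2 and j = 0 if ℓ is even, and i = (ℓ−1)/2 and j = 1 if ℓ is odd, one has i + j ≤ r and J = (z_2^2 − z_1·z_4, z_1^i·z_2^j·z_4^{r−i−j}). In particular J is generated by 2 elements (a complete intersection). -/
import Mathlib

open MvPolynomial Pointwise

namespace Stmt18Aux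

noncomputable def mk2 (m n : ℕ) : Fin 2 →₀ ℕ := Finsupp.single 0 m + Finsupp.single 1 n

lemma mk2_apply0 (m n : ℕ) : mk2 m n 0 = m := by simp [mk2, Finsupp.single_apply]
lemma mk2_apply1 (m n : ℕ) : mk2 m n 1 = n := by simp [mk2, Finsupp.single_apply]

lemma mk2_le {m n m' n' : ℕ} : mk2 m n ≤ mk2 m' n' ↔ m ≤ m' ∧ n ≤ n' := by
  rw [Finsupp.le_def]
  constructor
  · intro hle
    exact ⟨by simpa [mk2_apply0] using hle 0, by simpa [mk2_apply1] using hle 1⟩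
  · rintro ⟨h1, h2⟩ i
    fin_cases i <;> simpa [mk2_apply0, mk2_apply1]

lemma mk2_inj {m n m' n' : ℕ} (h : mk2 m n = mk2 m' n') : m = m' ∧ n = n' :=
  ⟨by rw [← mk2_apply0 m n, h, mk2_apply0], by rw [← mk2_apply1 m n, h, mk2_apply1]⟩

lemma mk2_add (m n m' n' : ℕ) : mk2 m n + mk2 m' n' = mk2 (m + m') (n + n') := by
  simp only [mk2, Finsupp.single_add]
  abel

lemma mk2_zero : mk2 0 0 = 0 := by simp [mk2]

noncomputable def mk4 (p q s t : ℕ) : Fin 4 →₀ ℕ :=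
  Finsupp.single 0 p + Finsupp.single 1 q + Finsupp.single 2 s + Finsupp.single 3 t

lemma mk4_apply0 (p q s t : ℕ) : mk4 p q s t 0 = p := by simp [mk4, Finsupp.single_apply]
lemma mk4_apply1 (p q s t : ℕ) : mk4 p q s t 1 = q := by simp [mk4, Finsupp.single_apply]
lemma mk4_apply2 (p q s t : ℕ) : mk4 p q s t 2 = s := by simp [mk4, Finsupp.single_apply]
lemma mk4_apply3 (p q s t : ℕ) : mk4 p q s t 3 = t := by simp [mk4, Finsupp.single_apply]

lemma mk4_eta (α : Fin 4 →₀ ℕ) : mk4 (α 0) (α 1) (α 2) (α 3) = α := by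
  ext i
  fin_cases i <;> simp [mk4_apply0, mk4_apply1, mk4_apply2, mk4_apply3]

/-! ### arithmetic -/

def SS (a b c d : ℕ) : Set ℕ :=
  {s : ℕ | 1 ≤ s ∧ ∃ l : ℕ, 0 < l ∧ c * s ≤ a * l ∧ b * l ≤ (2 * b - d) * s}

variable {a b c d : ℕ}

lemma mem_SS_ab (ha : 0 < a) (hb : 0 < b) (hc : 0 < c) (hd2b : d < 2 * b)
    (hkey : b * c + a * d < 2 * a * b) : a * b ∈ SS a b c d := by
  refine ⟨Nat.one_le_iff_ne_zero.mpr (by positivity), b * c + 1, by omega, ?_, ?_⟩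
  · calc c * (a * b) = a * (b * c) := by ring
      _ ≤ a * (b * c + 1) := Nat.mul_le_mul le_rfl (by omega)
  · have hD : (2 * b - d) + d = 2 * b := by omega
    have h2 : (2 * b - d) * (a * b) + d * (a * b) = 2 * b * (a * b) := by
      rw [← Nat.add_mul, hD]
    have h1 : b * (b * c + a * d + 1) ≤ b * (2 * a * b) :=
      Nat.mul_le_mul le_rfl hkey
    nlinarith [h1, h2]

lemma two_le_sInf (ha : 0 < a) (hb : 0 < b) (hc : 0 < c) (hbd1 : b < d) (hd2b : d < 2 * b)
    (hkey : b * c + a * d < 2 * a * b) : 2 ≤ sInf (SS a b c d) := by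
  have hne : (SS a b c d).Nonempty := ⟨a * b, mem_SS_ab ha hb hc hd2b hkey⟩
  obtain ⟨h1, l, hl0, hl1, hl2⟩ := Nat.sInf_mem hne
  rcases Nat.lt_or_ge (sInf (SS a b c d)) 2 with h | h
  · exfalso
    have hr1 : sInf (SS a b c d) = 1 := by omega
    rw [hr1, Nat.mul_one] at hl2
    have : b * 1 ≤ b * l := Nat.mul_le_mul le_rfl hl0
    omega
  · exact h

lemma no_consecutive (ha : 0 < a) (hb : 0 < b) (hc : 0 < c) (hbd1 : b < d) (hd2b : d < 2 * b)
    (hkey : b * c + a * d < 2 * a * b) (m : ℕ) (hm : 1 ≤ m)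
    (h1 : c * sInf (SS a b c d) ≤ a * m)
    (h2 : b * (m + 1) ≤ (2 * b - d) * sInf (SS a b c d)) : False := by
  set r := sInf (SS a b c d) with hr
  have hr2 : 2 ≤ r := two_le_sInf ha hb hc hbd1 hd2b hkey
  have hmem : r - 1 ∈ SS a b c d := by
    refine ⟨by omega, m, hm, ?_, ?_⟩
    · exact le_trans (Nat.mul_le_mul le_rfl (by omega)) h1
    · have hsplit : (2 * b - d) * (r - 1) + (2 * b - d) * 1 = (2 * b - d) * r := by
        rw [← Nat.mul_add]; congr 1; omega
      have hDb : 2 * b - d ≤ b := by omega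
      have : b * (m + 1) = b * m + b := by ring
      omega
  have := Nat.sInf_le hmem
  omega

lemma sub_form (x y : ℕ) (h : d < 2 * b) :
    b * x + d * y ≤ 2 * (b * y) ↔ b * x ≤ (2 * b - d) * y := by
  have hsplit : (2 * b - d) * y + d * y = 2 * (b * y) := by
    have hD : (2 * b - d) + d = 2 * b := by omega
    calc (2 * b - d) * y + d * y = ((2 * b - d) + d) * y := by ring
      _ = 2 * b * y := by rw [hD]
      _ = 2 * (b * y) := by ring
  omega

lemma claim1 (ha : 0 < a) (hb : 0 < b) (hc : 0 < c) (hbd1 : b < d) (hd2b : d < 2 * b)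
    (hkey : b * c + a * d < 2 * a * b) {l : ℕ}
    (hl1 : c * sInf (SS a b c d) ≤ a * l)
    (hl2 : b * l ≤ (2 * b - d) * sInf (SS a b c d))
    (σ lam : ℕ) (hσ : 1 ≤ σ) (hlam : 1 ≤ lam)
    (h1 : c * σ ≤ a * lam) (h2 : b * lam + d * σ ≤ 2 * (b * σ)) : l ≤ lam := by
  set r := sInf (SS a b c d) with hr
  have h2' : b * lam ≤ (2 * b - d) * σ := (sub_form lam σ hd2b).mp h2
  have hrσ : r ≤ σ := Nat.sInf_le ⟨hσ, lam, hlam, h1, h2'⟩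
  by_contra hcon
  push_neg at hcon
  apply no_consecutive ha hb hc hbd1 hd2b hkey lam hlam
  · exact le_trans (Nat.mul_le_mul le_rfl hrσ) h1
  · calc b * (lam + 1) ≤ b * l := Nat.mul_le_mul le_rfl (by omega)
      _ ≤ (2 * b - d) * r := hl2

lemma claim2 (ha : 0 < a) (hb : 0 < b) (hc : 0 < c) (hbd1 : b < d) (hd2b : d < 2 * b)
    (hkey : b * c + a * d < 2 * a * b) {l : ℕ} (hl0 : 0 < l)
    (hl1 : c * sInf (SS a b c d) ≤ a * l)
    (hl2 : b * l ≤ (2 * b - d) * sInf (SS a b c d))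
    (σ lam : ℕ) (hσ : 1 ≤ σ) (hlam : 1 ≤ lam)
    (h1 : c * σ ≤ a * lam) (h2 : b * lam + d * σ ≤ 2 * (b * σ)) :
    lam + 2 * sInf (SS a b c d) ≤ 2 * σ + l := by
  set r := sInf (SS a b c d) with hr
  have h2' : b * lam ≤ (2 * b - d) * σ := (sub_form lam σ hd2b).mp h2
  have hrσ : r ≤ σ := Nat.sInf_le ⟨hσ, lam, hlam, h1, h2'⟩
  by_contra hcon
  push_neg at hcon
  apply no_consecutive ha hb hc hbd1 hd2b hkey l hl0 hl1
  have hdr : d * r ≤ d * σ := Nat.mul_le_mul le_rfl hrσ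
  have hmul : b * (2 * σ + l + 1) ≤ b * (lam + 2 * r) := Nat.mul_le_mul le_rfl (by omega)
  have hsplitr : (2 * b - d) * r + d * r = 2 * (b * r) := by
    have h : (2 * b - d) + d = 2 * b := by omega
    calc (2 * b - d) * r + d * r = ((2 * b - d) + d) * r := by ring
      _ = 2 * b * r := by rw [h]
      _ = 2 * (b * r) := by ring
  nlinarith [hmul, hdr, h2, hsplitr]

lemma l_lt_r (ha : 0 < a) (hb : 0 < b) (hc : 0 < c) (hbd1 : b < d) (hd2b : d < 2 * b)
    (hkey : b * c + a * d < 2 * a * b) {l : ℕ} (hl0 : 0 < l)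
    (hl2 : b * l ≤ (2 * b - d) * sInf (SS a b c d)) : l < sInf (SS a b c d) := by
  set r := sInf (SS a b c d) with hr
  have hr2 : 2 ≤ r := two_le_sInf ha hb hc hbd1 hd2b hkey
  have hsplitr : (2 * b - d) * r + d * r = 2 * (b * r) := by
    have h : (2 * b - d) + d = 2 * b := by omega
    calc (2 * b - d) * r + d * r = ((2 * b - d) + d) * r := by ring
      _ = 2 * b * r := by rw [h]
      _ = 2 * (b * r) := by ring
  have hdr : (b + 1) * r ≤ d * r := Nat.mul_le_mul (by omega) le_rfl
  by_contra hcon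
  push_neg at hcon
  have : b * r ≤ b * l := Nat.mul_le_mul le_rfl hcon
  nlinarith [hl2, hsplitr, hdr, this]

lemma key_arith (a b c d r l : ℕ) (ha : 0 < a) (hb : 0 < b) (hc : 0 < c)
    (hkey : b * c + a * d < 2 * a * b)
    (claim1 : ∀ σ lam : ℕ, 1 ≤ σ → 1 ≤ lam → c * σ ≤ a * lam →
      b * lam + d * σ ≤ 2 * (b * σ) → l ≤ lam)
    (claim2 : ∀ σ lam : ℕ, 1 ≤ σ → 1 ≤ lam → c * σ ≤ a * lam →
      b * lam + d * σ ≤ 2 * (b * σ) → lam + 2 * r ≤ 2 * σ + l)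
    (p q s t b1 b2 b3 b4 xx yy : ℕ)
    (hdeg : b1 + b2 + b3 + b4 = p + q + s + t) (hxy : xx + yy = 1)
    (hX : 2 * a * b1 + a * b2 + c * b3 + xx ≤ 2 * a * p + a * q + c * s)
    (hY : b * b2 + d * b3 + 2 * b * b4 + yy ≤ b * q + d * s + 2 * b * t) :
    l ≤ 2 * p + q ∧ 2 * r ≤ 2 * t + q + l := by
  have hs : s < b3 := by
    by_contra hcon
    push_neg at hcon
    obtain ⟨w, hw⟩ : ∃ w, s = b3 + w := ⟨s - b3, by omega⟩
    subst hw
    have hXb : b * (2 * a * b1 + a * b2 + c * b3 + xx) ≤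
        b * (2 * a * p + a * q + c * (b3 + w)) := Nat.mul_le_mul le_rfl hX
    have hYa : a * (b * b2 + d * b3 + 2 * b * b4 + yy) ≤
        a * (b * q + d * (b3 + w) + 2 * b * t) := Nat.mul_le_mul le_rfl hY
    have hdeg2 : 2 * a * b * (b1 + b2 + b3 + b4) = 2 * a * b * (p + q + (b3 + w) + t) := by
      rw [hdeg]
    have hge : 1 ≤ b * xx + a * yy := by
      rcases (show xx = 1 ∧ yy = 0 ∨ xx = 0 ∧ yy = 1 by omega) with ⟨h1, h2⟩ | ⟨h1, h2⟩ <;>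
        subst h1 <;> subst h2 <;> simpa
    have hD : (b * c + a * d + 1) * w ≤ 2 * a * b * w := Nat.mul_le_mul hkey le_rfl
    linarith [hXb, hYa, hdeg2, hge, hD]
  have hcb : c * s + c ≤ c * b3 := by
    calc c * s + c = c * (s + 1) := by ring
      _ ≤ c * b3 := Nat.mul_le_mul le_rfl hs
  have hlt : 2 * b1 + b2 < 2 * p + q := by
    have h1 : a * (2 * b1 + b2) + c ≤ a * (2 * p + q) := by linarith [hX, hcb]
    have h2 : a * (2 * b1 + b2) < a * (2 * p + q) := by omega
    exact lt_of_mul_lt_mul_left h2 (Nat.zero_le a)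
  obtain ⟨sig, hsig⟩ : ∃ sig, b3 = s + sig := ⟨b3 - s, by omega⟩
  obtain ⟨lam, hlam⟩ : ∃ lam, 2 * p + q = 2 * b1 + b2 + lam := ⟨2*p+q - (2*b1+b2), by omega⟩
  have hsig1 : 1 ≤ sig := by omega
  have hlam1 : 1 ≤ lam := by omega
  have hlam_a : a * (2 * p + q) = a * (2 * b1 + b2 + lam) := by rw [hlam]
  have hsig_c : c * b3 = c * s + c * sig := by rw [hsig]; ring
  have hstep2 : c * sig ≤ a * lam := by linarith [hX, hlam_a, hsig_c]
  have hM : b2 + 2 * b4 + 2 * sig = q + 2 * t + lam := by omega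
  have hMb : b * (b2 + 2 * b4 + 2 * sig) = b * (q + 2 * t + lam) := by rw [hM]
  have hsig_d : d * b3 = d * s + d * sig := by rw [hsig]; ring
  have hstep3 : b * lam + d * sig ≤ 2 * (b * sig) := by linarith [hY, hMb, hsig_d]
  have hc1 := claim1 sig lam hsig1 hlam1 hstep2 hstep3
  have hc2 := claim2 sig lam hsig1 hlam1 hstep2 hstep3
  omega

lemma wt_inj (a b c d : ℕ) (ha : 0 < a) (hkey : b * c + a * d < 2 * a * b)
    {p q s t p' q' s' t' : ℕ} (hq : q ≤ 1) (hq' : q' ≤ 1)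
    (h1 : 2 * a * p + a * q + c * s = 2 * a * p' + a * q' + c * s')
    (h2 : b * q + d * s + 2 * b * t = b * q' + d * s' + 2 * b * t')
    (hdeg : p + q + s + t = p' + q' + s' + t') :
    p = p' ∧ q = q' ∧ s = s' ∧ t = t' := by
  have hss : s = s' := by
    have h1' : (2 * a * p + a * q + c * s : ℤ) = 2 * a * p' + a * q' + c * s' := by
      exact_mod_cast h1
    have h2' : (b * q + d * s + 2 * b * t : ℤ) = b * q' + d * s' + 2 * b * t' := by
      exact_mod_cast h2
    have hdeg' : (p + q + s + t : ℤ) = (p' + q' + s' + t' : ℤ) := by exact_mod_cast hdeg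
    have hz : ((s : ℤ) - s') * (2 * a * b - (b * c + a * d)) = 0 := by
      linear_combination (-(b : ℤ)) * h1' - (a : ℤ) * h2' + 2 * (a : ℤ) * b * hdeg'
    have hne : (2 * a * b - (b * c + a * d) : ℤ) ≠ 0 := by
      have : (b * c + a * d : ℤ) < 2 * a * b := by exact_mod_cast hkey
      omega
    rcases mul_eq_zero.mp hz with h | h
    · have : (s : ℤ) = s' := by omega
      exact_mod_cast this
    · exact absurd h hne
  subst hss
  have h1' : a * (2 * p + q) = a * (2 * p' + q') := by linarith [h1]
  have h1'' : 2 * p + q = 2 * p' + q' := Nat.eq_of_mul_eq_mul_left ha h1'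
  exact ⟨by omega, by omega, rfl, by omega⟩

/-! ### monomial algebra -/

section Alg

variable {K : Type*} [Field K]

lemma monomial_mk2 (m n : ℕ) (k : K) :
    (monomial (mk2 m n) k : MvPolynomial (Fin 2) K) = C k * X 0 ^ m * X 1 ^ n := by
  simp only [X_pow_eq_monomial, C_mul_monomial, monomial_mul, mk2]
  simp

lemma monomial_mk4 (p q s t : ℕ) (k : K) :
    (monomial (mk4 p q s t) k : MvPolynomial (Fin 4) K) =
      C k * X 0 ^ p * X 1 ^ q * X 2 ^ s * X 3 ^ t := by
  simp only [X_pow_eq_monomial, C_mul_monomial, monomial_mul, mk4]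
  simp

lemma red_mem (p q s t m : ℕ) (k : K) :
    (monomial (mk4 p (q + 2 * m) s t) k : MvPolynomial (Fin 4) K)
      - monomial (mk4 (p + m) q s (t + m)) k
      ∈ Ideal.span {(X 1 : MvPolynomial (Fin 4) K) ^ 2 - X 0 * X 3} := by
  have hdvd : (X 1 : MvPolynomial (Fin 4) K) ^ 2 - X 0 * X 3 ∣
      ((X 1 : MvPolynomial (Fin 4) K) ^ 2) ^ m - (X 0 * X 3) ^ m :=
    sub_dvd_pow_sub_pow _ _ m
  rw [Ideal.mem_span_singleton]
  have heq : (monomial (mk4 p (q + 2 * m) s t) k : MvPolynomial (Fin 4) K)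
      - monomial (mk4 (p + m) q s (t + m)) k
      = C k * X 0 ^ p * X 1 ^ q * X 2 ^ s * X 3 ^ t *
          (((X 1 : MvPolynomial (Fin 4) K) ^ 2) ^ m - (X 0 * X 3) ^ m) := by
    rw [monomial_mk4, monomial_mk4]
    ring
  rw [heq]
  exact Dvd.dvd.mul_left hdvd _

lemma qd_mem (i j k4 p q s t : ℕ) (k : K)
    (hq : q ≤ 1) (hj : j ≤ 1)
    (hp : i + (if j = 1 ∧ q = 0 then 1 else 0) ≤ p)
    (ht : k4 + (if j = 1 ∧ q = 0 then 1 else 0) ≤ t) :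
    (monomial (mk4 p q s t) k : MvPolynomial (Fin 4) K) ∈
      Ideal.span {(X 1 : MvPolynomial (Fin 4) K) ^ 2 - X 0 * X 3,
        X 0 ^ i * X 1 ^ j * X 3 ^ k4} := by
  set P : MvPolynomial (Fin 4) K := X 1 ^ 2 - X 0 * X 3 with hP
  set Q : MvPolynomial (Fin 4) K := X 0 ^ i * X 1 ^ j * X 3 ^ k4 with hQ
  have hPmem : P ∈ Ideal.span {P, Q} := Ideal.subset_span (by simp)
  have hQmem : Q ∈ Ideal.span {P, Q} := Ideal.subset_span (by simp)
  by_cases hd : j = 1 ∧ q = 0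
  · rw [if_pos hd] at hp ht
    obtain ⟨p', hp'⟩ := Nat.exists_eq_add_of_le hp
    obtain ⟨t', ht'⟩ := Nat.exists_eq_add_of_le ht
    obtain ⟨hj1, hq0⟩ := hd
    subst hp' ht' hj1 hq0
    have heq : (monomial (mk4 (i + 1 + p') 0 s (k4 + 1 + t')) k : MvPolynomial (Fin 4) K)
        = (C k * X 0 ^ p' * X 1 * X 2 ^ s * X 3 ^ t') * Q
          - (C k * X 0 ^ (i + p') * X 2 ^ s * X 3 ^ (k4 + t')) * P := by
      rw [monomial_mk4, hP, hQ]; ring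
    rw [heq]
    exact sub_mem (Ideal.mul_mem_left _ _ hQmem) (Ideal.mul_mem_left _ _ hPmem)
  · rw [if_neg hd] at hp ht
    simp only [add_zero] at hp ht
    have hjq : j ≤ q := by omega
    obtain ⟨p', hp'⟩ := Nat.exists_eq_add_of_le hp
    obtain ⟨t', ht'⟩ := Nat.exists_eq_add_of_le ht
    obtain ⟨q', hq'⟩ := Nat.exists_eq_add_of_le hjq
    subst hp' ht' hq'
    have heq : (monomial (mk4 (i + p') (j + q') s (k4 + t')) k : MvPolynomial (Fin 4) K)
        = (C k * X 0 ^ p' * X 1 ^ q' * X 2 ^ s * X 3 ^ t') * Q := by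
      rw [monomial_mk4, hQ]; ring
    rw [heq]
    exact Ideal.mul_mem_left _ _ hQmem

def Dset (a b c d e : ℕ) : Set (Fin 2 →₀ ℕ) :=
  {η | ∃ p q s t : ℕ, p + q + s + t = e ∧
    η = mk2 (2*a*p + a*q + c*s) (b*q + d*s + 2*b*t)}

def Eset (a b c d e : ℕ) : Set (Fin 2 →₀ ℕ) :=
  {η | ∃ p q s t xx yy : ℕ, p + q + s + t = e ∧ xx + yy = 1 ∧
    η = mk2 (2*a*p + a*q + c*s + xx) (b*q + d*s + 2*b*t + yy)}

lemma pow_le_span (a b c d e : ℕ) :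
    (Ideal.span {(X 0 ^ (2*a) : MvPolynomial (Fin 2) K), X 0 ^ a * X 1 ^ b,
        X 0 ^ c * X 1 ^ d, X 1 ^ (2*b)}) ^ e
      ≤ Ideal.span ((fun η => (monomial η (1:K) : MvPolynomial (Fin 2) K)) '' Dset a b c d e) := by
  induction e with
  | zero =>
    have h1 : (1 : MvPolynomial (Fin 2) K) ∈
        Ideal.span ((fun η => (monomial η (1:K) : MvPolynomial (Fin 2) K)) '' Dset a b c d 0) := by
      apply Ideal.subset_span
      refine ⟨0, ⟨0, 0, 0, 0, by omega, by simp [mk2_zero]⟩, by simp⟩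
    rw [pow_zero, Ideal.one_eq_top, ← Ideal.span_singleton_one]
    exact Ideal.span_le.mpr (by simpa using h1)
  | succ e ih =>
    rw [pow_succ]
    have hbase : Ideal.span {(X 0 ^ (2*a) : MvPolynomial (Fin 2) K), X 0 ^ a * X 1 ^ b,
        X 0 ^ c * X 1 ^ d, X 1 ^ (2*b)}
        ≤ Ideal.span ((fun η => (monomial η (1:K) : MvPolynomial (Fin 2) K)) '' Dset a b c d 1) := by
      rw [Ideal.span_le]
      rintro x hx
      simp only [Set.mem_insert_iff, Set.mem_singleton_iff] at hx
      apply Ideal.subset_span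
      rcases hx with rfl | rfl | rfl | rfl
      · exact ⟨mk2 (2*a) 0, ⟨1, 0, 0, 0, by omega, by norm_num⟩,
          by show (monomial (mk2 (2*a) 0)) (1:K) = _; rw [monomial_mk2]; simp⟩
      · exact ⟨mk2 a b, ⟨0, 1, 0, 0, by omega, by norm_num⟩,
          by show (monomial (mk2 a b)) (1:K) = _; rw [monomial_mk2]; simp⟩
      · exact ⟨mk2 c d, ⟨0, 0, 1, 0, by omega, by norm_num⟩,
          by show (monomial (mk2 c d)) (1:K) = _; rw [monomial_mk2]; simp⟩
      · exact ⟨mk2 0 (2*b), ⟨0, 0, 0, 1, by omega, by norm_num⟩,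
          by show (monomial (mk2 0 (2*b))) (1:K) = _; rw [monomial_mk2]; simp⟩
    refine le_trans (Ideal.mul_mono ih hbase) ?_
    rw [Ideal.span_mul_span']
    rw [Ideal.span_le]
    rintro x hx
    rw [Set.mem_mul] at hx
    obtain ⟨y, hy, z, hz, rfl⟩ := hx
    obtain ⟨η1, ⟨p, q, s, t, hsum, rfl⟩, rfl⟩ := hy
    obtain ⟨η2, ⟨p', q', s', t', hsum', rfl⟩, rfl⟩ := hz
    apply Ideal.subset_span
    refine ⟨_, ⟨p + p', q + q', s + s', t + t', by omega, rfl⟩, ?_⟩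
    simp only [monomial_mul, mul_one, mk2_add]
    congr 2 <;> ring

lemma mem_mmIe_support (a b c d e : ℕ) (f : MvPolynomial (Fin 2) K)
    (hf : f ∈ Ideal.span {(X 0 : MvPolynomial (Fin 2) K), X 1} *
      (Ideal.span {(X 0 ^ (2*a) : MvPolynomial (Fin 2) K), X 0 ^ a * X 1 ^ b,
        X 0 ^ c * X 1 ^ d, X 1 ^ (2*b)}) ^ e) :
    ∀ w ∈ f.support, ∃ η ∈ Eset a b c d e, η ≤ w := by
  have hmm : Ideal.span {(X 0 : MvPolynomial (Fin 2) K), X 1}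
      ≤ Ideal.span ((fun η => (monomial η (1:K) : MvPolynomial (Fin 2) K)) ''
        {mk2 1 0, mk2 0 1}) := by
    rw [Ideal.span_le]
    rintro x hx
    simp only [Set.mem_insert_iff, Set.mem_singleton_iff] at hx
    apply Ideal.subset_span
    rcases hx with rfl | rfl
    · exact ⟨mk2 1 0, by simp, by show (monomial (mk2 1 0)) (1:K) = _; rw [monomial_mk2]; simp⟩
    · exact ⟨mk2 0 1, by simp, by show (monomial (mk2 0 1)) (1:K) = _; rw [monomial_mk2]; simp⟩
  have hprod : f ∈ Ideal.span (((fun η => (monomial η (1:K) : MvPolynomial (Fin 2) K)) ''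
      {mk2 1 0, mk2 0 1}) * ((fun η => (monomial η (1:K) : MvPolynomial (Fin 2) K)) ''
      Dset a b c d e)) := by
    rw [← Ideal.span_mul_span']
    exact Ideal.mul_mono hmm (pow_le_span a b c d e) hf
  have hle : f ∈ Ideal.span ((fun η => (monomial η (1:K) : MvPolynomial (Fin 2) K)) ''
      Eset a b c d e) := by
    refine Ideal.span_le.mpr ?_ hprod
    rintro x hx
    rw [Set.mem_mul] at hx
    obtain ⟨y, hy, z, hz, rfl⟩ := hx
    obtain ⟨η1, hη1, rfl⟩ := hy
    obtain ⟨η2, ⟨p, q, s, t, hsum, rfl⟩, rfl⟩ := hz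
    apply Ideal.subset_span
    simp only [Set.mem_insert_iff, Set.mem_singleton_iff] at hη1
    rcases hη1 with rfl | rfl
    · refine ⟨_, ⟨p, q, s, t, 1, 0, hsum, rfl, rfl⟩, ?_⟩
      simp only [monomial_mul, mul_one, mk2_add]
      congr 2 <;> ring
    · refine ⟨_, ⟨p, q, s, t, 0, 1, hsum, by omega, rfl⟩, ?_⟩
      simp only [monomial_mul, mul_one, mk2_add]
      congr 2 <;> ring
  intro w hw
  exact mem_ideal_span_monomial_image.mp hle w hw

lemma homog_iff (φ : MvPolynomial (Fin 4) K) (n : ℕ) :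
    φ.IsHomogeneous n ↔ ∀ δ ∈ φ.support, δ 0 + δ 1 + δ 2 + δ 3 = n := by
  have hw : ∀ δ : Fin 4 →₀ ℕ, (Finsupp.weight (1 : Fin 4 → ℕ)) δ = δ 0 + δ 1 + δ 2 + δ 3 := by
    intro δ
    rw [Finsupp.weight_apply, Finsupp.sum_fintype _ _ (by simp), Fin.sum_univ_four]
    simp
  constructor
  · intro h δ hδ
    rw [← hw δ]
    exact h (mem_support_iff.mp hδ)
  · intro h δ hδ
    rw [show ((Finsupp.weight 1) δ : ℕ) = δ 0 + δ 1 + δ 2 + δ 3 from hw δ]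
    exact h δ (mem_support_iff.mpr hδ)

lemma aeval_u_monomial (a b c d : ℕ) (u : Fin 4 → MvPolynomial (Fin 2) K)
    (hu0 : u 0 = X 0 ^ (2 * a)) (hu1 : u 1 = X 0 ^ a * X 1 ^ b)
    (hu2 : u 2 = X 0 ^ c * X 1 ^ d) (hu3 : u 3 = X 1 ^ (2 * b))
    (α : Fin 4 →₀ ℕ) (k : K) :
    aeval u (monomial α k) =
      monomial (mk2 (2*a*(α 0) + a*(α 1) + c*(α 2)) (b*(α 1) + d*(α 2) + 2*b*(α 3))) k := by
  have h1 : (monomial α k : MvPolynomial (Fin 4) K) = monomial (mk4 (α 0) (α 1) (α 2) (α 3)) k := by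
    rw [mk4_eta]
  rw [h1, aeval_monomial, Finsupp.prod_pow]
  rw [Fin.prod_univ_four]
  simp only [mk4_apply0, mk4_apply1, mk4_apply2, mk4_apply3]
  rw [hu0, hu1, hu2, hu3]
  rw [monomial_mk2, algebraMap_eq]
  ring

theorem reduction (a b c d r l i j : ℕ)
    (ha : 0 < a) (hb : 0 < b) (hc : 0 < c)
    (hkey : b * c + a * d < 2 * a * b)
    (claim1 : ∀ σ lam : ℕ, 1 ≤ σ → 1 ≤ lam → c * σ ≤ a * lam →
      b * lam + d * σ ≤ 2 * (b * σ) → l ≤ lam)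
    (claim2 : ∀ σ lam : ℕ, 1 ≤ σ → 1 ≤ lam → c * σ ≤ a * lam →
      b * lam + d * σ ≤ 2 * (b * σ) → lam + 2 * r ≤ 2 * σ + l)
    (hij : 2 * i + j = l) (hj : j ≤ 1) (hijr : i + j ≤ r)
    (u : Fin 4 → MvPolynomial (Fin 2) K)
    (hu0 : u 0 = X 0 ^ (2 * a)) (hu1 : u 1 = X 0 ^ a * X 1 ^ b)
    (hu2 : u 2 = X 0 ^ c * X 1 ^ d) (hu3 : u 3 = X 1 ^ (2 * b))
    (e : ℕ) (g : MvPolynomial (Fin 4) K) (hg : g.IsHomogeneous e)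
    (hGJ : ∀ f : MvPolynomial (Fin 4) K,
      f ∈ Ideal.span {(X 1 : MvPolynomial (Fin 4) K) ^ 2 - X 0 * X 3,
        X 0 ^ i * X 1 ^ j * X 3 ^ (r - i - j)} → f.IsHomogeneous e →
      aeval u f ∈ Ideal.span {(X 0 : MvPolynomial (Fin 2) K), X 1} *
        (Ideal.span {(X 0 ^ (2*a) : MvPolynomial (Fin 2) K), X 0 ^ a * X 1 ^ b,
          X 0 ^ c * X 1 ^ d, X 1 ^ (2*b)}) ^ e)
    (hgmem : aeval u g ∈ Ideal.span {(X 0 : MvPolynomial (Fin 2) K), X 1} *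
        (Ideal.span {(X 0 ^ (2*a) : MvPolynomial (Fin 2) K), X 0 ^ a * X 1 ^ b,
          X 0 ^ c * X 1 ^ d, X 1 ^ (2*b)}) ^ e) :
    g ∈ Ideal.span {(X 1 : MvPolynomial (Fin 4) K) ^ 2 - X 0 * X 3,
      X 0 ^ i * X 1 ^ j * X 3 ^ (r - i - j)} := by
  classical
  set k4 : ℕ := r - i - j with hk4def
  have hk4 : i + j + k4 = r := by omega
  set G : Ideal (MvPolynomial (Fin 4) K) :=
    Ideal.span {(X 1 : MvPolynomial (Fin 4) K) ^ 2 - X 0 * X 3,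
      X 0 ^ i * X 1 ^ j * X 3 ^ k4} with hG
  set QD : (Fin 4 →₀ ℕ) → Prop := fun γ =>
    i + (if j = 1 ∧ γ 1 = 0 then 1 else 0) ≤ γ 0 ∧
    k4 + (if j = 1 ∧ γ 1 = 0 then 1 else 0) ≤ γ 3 with hQD
  have hQDdec : DecidablePred QD := fun γ => by rw [hQD]; infer_instance
  set red : (Fin 4 →₀ ℕ) → (Fin 4 →₀ ℕ) := fun α =>
    mk4 (α 0 + α 1 / 2) (α 1 % 2) (α 2) (α 3 + α 1 / 2) with hred
  set h : MvPolynomial (Fin 4) K :=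
    ∑ α ∈ g.support, if QD (red α) then 0 else monomial (red α) (coeff α g) with hh
  have hredmem : ∀ (α : Fin 4 →₀ ℕ) (k : K),
      (monomial α k : MvPolynomial (Fin 4) K) - monomial (red α) k ∈
        Ideal.span {(X 1 : MvPolynomial (Fin 4) K) ^ 2 - X 0 * X 3} := by
    intro α k
    have h1 : (monomial α k : MvPolynomial (Fin 4) K)
        = monomial (mk4 (α 0) (α 1 % 2 + 2 * (α 1 / 2)) (α 2) (α 3)) k := by
      rw [show α 1 % 2 + 2 * (α 1 / 2) = α 1 from by omega, mk4_eta]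
    rw [h1, hred]
    exact red_mem (α 0) (α 1 % 2) (α 2) (α 3) (α 1 / 2) k
  have hspanP : Ideal.span {(X 1 : MvPolynomial (Fin 4) K) ^ 2 - X 0 * X 3} ≤ G := by
    rw [hG]
    apply Ideal.span_mono
    simp
  have hgh : g - h ∈ G := by
    have hgsum : g = ∑ α ∈ g.support, monomial α (coeff α g) :=
      (support_sum_monomial_coeff g).symm
    rw [hh]
    nth_rewrite 1 [hgsum]
    rw [← Finset.sum_sub_distrib]
    apply Ideal.sum_mem
    intro α hα
    by_cases hqd : QD (red α)
    · rw [if_pos hqd, sub_zero]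
      have hstep : (monomial α (coeff α g) : MvPolynomial (Fin 4) K)
          = (monomial α (coeff α g) - monomial (red α) (coeff α g))
            + monomial (red α) (coeff α g) := by ring
      rw [hstep]
      apply Ideal.add_mem
      · exact hspanP (hredmem α _)
      · obtain ⟨h1, h2⟩ := hqd
        simp only [hred, mk4_apply0, mk4_apply1, mk4_apply3] at h1 h2
        have := qd_mem (K := K) i j k4 (α 0 + α 1 / 2) (α 1 % 2) (α 2) (α 3 + α 1 / 2)
          (coeff α g) (by omega) hj h1 h2
        rw [hG]
        exact this
    · rw [if_neg hqd]
      exact hspanP (hredmem α _)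
  have hgdeg : ∀ α ∈ g.support, α 0 + α 1 + α 2 + α 3 = e := (homog_iff g e).mp hg
  have hsupp : ∀ γ ∈ h.support, γ 1 ≤ 1 ∧ (γ 0 + γ 1 + γ 2 + γ 3 = e) ∧ ¬ QD γ := by
    intro γ hγ
    rw [hh] at hγ
    have := MvPolynomial.support_sum hγ
    rw [Finset.mem_biUnion] at this
    obtain ⟨α, hα, hγα⟩ := this
    by_cases hqd : QD (red α)
    · rw [if_pos hqd] at hγα; simp at hγα
    · rw [if_neg hqd] at hγα
      have hsub := support_monomial_subset hγα
      rw [Finset.mem_singleton] at hsub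
      subst hsub
      have hαdeg := hgdeg α hα
      refine ⟨?_, ?_, ?_⟩
      · simp only [hred, mk4_apply1]; omega
      · simp only [hred, mk4_apply0, mk4_apply1, mk4_apply2, mk4_apply3]; omega
      · simpa only [hred] using hqd
  have hhom : h.IsHomogeneous e := (homog_iff h e).mpr (fun γ hγ => (hsupp γ hγ).2.1)
  have hhmem : aeval u h ∈ Ideal.span {(X 0 : MvPolynomial (Fin 2) K), X 1} *
      (Ideal.span {(X 0 ^ (2*a) : MvPolynomial (Fin 2) K), X 0 ^ a * X 1 ^ b,
        X 0 ^ c * X 1 ^ d, X 1 ^ (2*b)}) ^ e := by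
    have h1 : h = g - (g - h) := by ring
    rw [h1, map_sub]
    exact Submodule.sub_mem _ hgmem (hGJ (g - h) hgh (hg.sub hhom))
  set W : (Fin 4 →₀ ℕ) → (Fin 2 →₀ ℕ) := fun γ =>
    mk2 (2*a*(γ 0) + a*(γ 1) + c*(γ 2)) (b*(γ 1) + d*(γ 2) + 2*b*(γ 3)) with hW
  have haev : aeval u h = ∑ γ ∈ h.support, monomial (W γ) (coeff γ h) := by
    conv_lhs => rw [← support_sum_monomial_coeff h]
    rw [map_sum]
    exact Finset.sum_congr rfl fun γ _ => aeval_u_monomial a b c d u hu0 hu1 hu2 hu3 γ _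
  have hzero : h = 0 := by
    by_contra hne
    obtain ⟨γ0, hγ0⟩ := (MvPolynomial.support_nonempty.mpr hne)
    have hcoeff : coeff (W γ0) (aeval u h) = coeff γ0 h := by
      rw [haev, coeff_sum]
      rw [Finset.sum_eq_single γ0]
      · rw [coeff_monomial, if_pos rfl]
      · intro γ hγ hγne
        rw [coeff_monomial]
        rw [if_neg]
        intro hWeq
        obtain ⟨hx, hy⟩ := mk2_inj hWeq
        obtain ⟨e0, e1, e2, e3⟩ := wt_inj a b c d ha hkey (hsupp γ hγ).1 (hsupp γ0 hγ0).1 hx hy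
          (by rw [(hsupp γ hγ).2.1, (hsupp γ0 hγ0).2.1])
        apply hγne
        rw [← mk4_eta γ, ← mk4_eta γ0, e0, e1, e2, e3]
      · intro hγ0n
        exact absurd hγ0 hγ0n
    have hWmem : W γ0 ∈ (aeval u h).support := by
      rw [mem_support_iff, hcoeff]
      exact mem_support_iff.mp hγ0
    obtain ⟨η, ⟨p', q', s', t', xx, yy, hsum', hxy, rfl⟩, hle⟩ :=
      mem_mmIe_support a b c d e (aeval u h) hhmem (W γ0) hWmem
    rw [hW] at hle
    simp only at hle
    obtain ⟨hX', hY'⟩ := mk2_le.mp hle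
    obtain ⟨hq0, hdeg0, hnqd⟩ := hsupp γ0 hγ0
    obtain ⟨hcon1, hcon2⟩ := key_arith a b c d r l ha hb hc hkey claim1 claim2
      (γ0 0) (γ0 1) (γ0 2) (γ0 3) p' q' s' t' xx yy (by omega) hxy hX' hY'
    apply hnqd
    rw [hQD]
    constructor <;> {by_cases hcase : j = 1 ∧ γ0 1 = 0 <;> simp [hcase] <;> omega}
  rw [hzero, sub_zero] at hgh
  rw [hG] at hgh
  exact hgh

end Alg

end Stmt18Aux

open Stmt18Aux

set_option maxHeartbeats 1000000 in
theorem stmt_18 {K : Type*} [Field K] (a b c d : ℕ)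
    (ha : 0 < a) (hb : 0 < b) (hc : 0 < c) (hd : 0 < d)
    (hac : Nat.gcd a c = 1) (hbd : Nat.gcd b d = 1)
    (hba : a ≤ b) (hca : c < a) (hbd1 : b < d) (hd2b : d < 2 * b)
    (u : Fin 4 → MvPolynomial (Fin 2) K)
    (hu0 : u 0 = X 0 ^ (2 * a)) (hu1 : u 1 = X 0 ^ a * X 1 ^ b)
    (hu2 : u 2 = X 0 ^ c * X 1 ^ d) (hu3 : u 3 = X 1 ^ (2 * b))
    (I mm : Ideal (MvPolynomial (Fin 2) K))
    (hI : I = Ideal.span {u 0, u 1, u 2, u 3})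
    (hmm : mm = Ideal.span {(X 0 : MvPolynomial (Fin 2) K), X 1})
    (J : Ideal (MvPolynomial (Fin 4) K))
    (hJ : ∀ f : MvPolynomial (Fin 4) K,
      f ∈ J ↔ ∀ e : ℕ, aeval u (homogeneousComponent e f) ∈ mm * I ^ e)
    (hkey : b * c + a * d < 2 * a * b) :
    {s : ℕ | 1 ≤ s ∧ ∃ l : ℕ, 0 < l ∧ c * s ≤ a * l ∧ b * l ≤ (2 * b - d) * s}.Nonempty ∧
    ∃ l : ℕ, 0 < l ∧
      c * sInf {s : ℕ | 1 ≤ s ∧ ∃ l : ℕ, 0 < l ∧ c * s ≤ a * l ∧ b * l ≤ (2 * b - d) * s} ≤ a * l ∧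
      b * l ≤ (2 * b - d) * sInf {s : ℕ | 1 ≤ s ∧ ∃ l : ℕ, 0 < l ∧ c * s ≤ a * l ∧ b * l ≤ (2 * b - d) * s} ∧
      (let r : ℕ := sInf {s : ℕ | 1 ≤ s ∧ ∃ l : ℕ, 0 < l ∧ c * s ≤ a * l ∧ b * l ≤ (2 * b - d) * s};
       let i : ℕ := if Even l then l / 2 else (l - 1) / 2;
       let j : ℕ := if Even l then 0 else 1;
       i + j ≤ r ∧
       J = Ideal.span {(X 1 : MvPolynomial (Fin 4) K) ^ 2 - X 0 * X 3,
         X 0 ^ i * X 1 ^ j * X 3 ^ (r - i - j)}) := by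
  classical
  have hSSeq : SS a b c d =
      {s : ℕ | 1 ≤ s ∧ ∃ l : ℕ, 0 < l ∧ c * s ≤ a * l ∧ b * l ≤ (2 * b - d) * s} := rfl
  have hne : (SS a b c d).Nonempty := ⟨a * b, mem_SS_ab ha hb hc hd2b hkey⟩
  obtain ⟨hr1, l, hl0, hl1, hl2⟩ := Nat.sInf_mem hne
  set r : ℕ := sInf (SS a b c d) with hrdef
  set i : ℕ := if Even l then l / 2 else (l - 1) / 2 with hidef
  set j : ℕ := if Even l then 0 else 1 with hjdef
  have hij : 2 * i + j = l := by
    rcases Nat.even_or_odd l with he | ho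
    · have := Nat.even_iff.mp he
      rw [hidef, hjdef, if_pos he, if_pos he]
      omega
    · have := Nat.odd_iff.mp ho
      have hne' : ¬ Even l := Nat.not_even_iff_odd.mpr ho
      rw [hidef, hjdef, if_neg hne', if_neg hne']
      omega
  have hj1 : j ≤ 1 := by
    rw [hjdef]; split <;> omega
  have hlr : l < r := l_lt_r ha hb hc hbd1 hd2b hkey hl0 hl2
  have hijr : i + j ≤ r := by omega
  -- the two generators
  set P : MvPolynomial (Fin 4) K := X 1 ^ 2 - X 0 * X 3 with hPdef
  set Q : MvPolynomial (Fin 4) K := X 0 ^ i * X 1 ^ j * X 3 ^ (r - i - j) with hQdef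
  set k4 : ℕ := r - i - j with hk4def
  have hk4 : i + j + k4 = r := by omega
  -- P is homogeneous of degree 2
  have hPhom : P.IsHomogeneous 2 := by
    rw [hPdef]
    have h1 : ((X 1 : MvPolynomial (Fin 4) K) ^ 2).IsHomogeneous 2 := by
      simpa using (isHomogeneous_X K (1 : Fin 4)).pow 2
    have h2 : ((X 0 : MvPolynomial (Fin 4) K) * X 3).IsHomogeneous 2 :=
      (isHomogeneous_X K (0 : Fin 4)).mul (isHomogeneous_X K (3 : Fin 4))
    exact h1.sub h2
  have hQhom : Q.IsHomogeneous r := by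
    rw [hQdef]
    have h1 : ((X 0 : MvPolynomial (Fin 4) K) ^ i).IsHomogeneous i := by
      simpa using (isHomogeneous_X K (0 : Fin 4)).pow i
    have h2 : ((X 1 : MvPolynomial (Fin 4) K) ^ j).IsHomogeneous j := by
      simpa using (isHomogeneous_X K (1 : Fin 4)).pow j
    have h3 : ((X 3 : MvPolynomial (Fin 4) K) ^ (r - i - j)).IsHomogeneous (r - i - j) := by
      simpa using (isHomogeneous_X K (3 : Fin 4)).pow (r - i - j)
    have := (h1.mul h2).mul h3
    have hsum : i + j + (r - i - j) = r := by omega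
    rw [hsum] at this
    exact this
  -- P ∈ J
  have hPJ : P ∈ J := by
    rw [hJ]
    intro e
    rw [homogeneousComponent_of_mem (mem_homogeneousSubmodule _ _ |>.mpr hPhom)]
    by_cases he : e = 2
    · rw [if_pos he]
      have hzero : aeval u P = 0 := by
        rw [hPdef, map_sub, map_mul, map_pow, aeval_X, aeval_X, aeval_X, hu0, hu1, hu3]
        ring
      rw [hzero]
      exact Submodule.zero_mem _
    · rw [if_neg he, map_zero]
      exact Submodule.zero_mem _
  -- Q ∈ J
  have hQJ : Q ∈ J := by
    rw [hJ]
    intro e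
    rw [homogeneousComponent_of_mem (mem_homogeneousSubmodule _ _ |>.mpr hQhom)]
    by_cases he : e = r
    · rw [if_pos he, he]
      obtain ⟨xx, hxx⟩ : ∃ xx, a * l = c * r + xx := ⟨a * l - c * r, by omega⟩
      obtain ⟨yy, hyy⟩ : ∃ yy, (2 * b - d) * r = b * l + yy := ⟨(2*b-d)*r - b*l, by omega⟩
      have h2br : 2 * (b * r) = b * l + d * r + yy := by
        have hsplit : (2 * b - d) * r + d * r = 2 * (b * r) := by
          have hD : (2 * b - d) + d = 2 * b := by omega
          calc (2 * b - d) * r + d * r = ((2 * b - d) + d) * r := by ring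
            _ = 2 * b * r := by rw [hD]
            _ = 2 * (b * r) := by ring
        omega
      have hpos : 1 ≤ xx + yy := by
        by_contra hcon
        push_neg at hcon
        have hxx0 : xx = 0 := by omega
        have hyy0 : yy = 0 := by omega
        subst hxx0 hyy0
        have hr1' : 1 ≤ r := hr1
        have e1 : b * (a * l) = b * (c * r) := by rw [hxx]; ring_nf
        have e2 : a * (2 * (b * r)) = a * (b * l + d * r) := by rw [h2br]; ring_nf
        have e3 : (b * c + a * d) * r < 2 * a * b * r :=
          Nat.mul_lt_mul_of_lt_of_le hkey le_rfl (by omega)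
        nlinarith [e1, e2, e3]
      -- exponent identities
      have xE : 2 * a * i + a * j = c * r + xx := by
        have h5 : a * l = 2 * a * i + a * j := by rw [← hij]; ring
        omega
      have yE : b * j + 2 * b * k4 = d * r + yy := by
        have h5 : b * j + 2 * b * k4 + b * l = 2 * (b * r) := by
          have : b * j + 2 * b * k4 + b * l = 2 * b * (i + j + k4) := by rw [← hij]; ring
          rw [this, hk4]; ring
        omega
      have hQval : aeval u Q = X 0 ^ (c * r + xx) * X 1 ^ (d * r + yy) := by
        rw [hQdef, map_mul, map_mul, map_pow, map_pow, map_pow, aeval_X, aeval_X, aeval_X,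
          hu0, hu1, hu3]
        have : ((X 0 : MvPolynomial (Fin 2) K) ^ (2 * a)) ^ i * (X 0 ^ a * X 1 ^ b) ^ j *
            (X 1 ^ (2 * b)) ^ (r - i - j)
            = X 0 ^ (2 * a * i + a * j) * X 1 ^ (b * j + 2 * b * (r - i - j)) := by
          rw [mul_pow, ← pow_mul, ← pow_mul, ← pow_mul, ← pow_mul]
          ring
        rw [this]
        rw [show b * j + 2 * b * (r - i - j) = b * j + 2 * b * k4 from rfl]
        rw [xE, yE]
      rw [hmm, hI, hu0, hu1, hu2, hu3, hQval]
      have hu2I : (X 0 ^ c * X 1 ^ d : MvPolynomial (Fin 2) K) ^ r ∈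
          (Ideal.span {(X 0 ^ (2*a) : MvPolynomial (Fin 2) K), X 0 ^ a * X 1 ^ b,
            X 0 ^ c * X 1 ^ d, X 1 ^ (2*b)}) ^ r :=
        Ideal.pow_mem_pow (Ideal.subset_span (by simp)) r
      rcases (show 1 ≤ xx ∨ 1 ≤ yy by omega) with hx1 | hy1
      · obtain ⟨xx', hxx'⟩ := Nat.exists_eq_add_of_le hx1
        have heq : (X 0 : MvPolynomial (Fin 2) K) ^ (c * r + xx) * X 1 ^ (d * r + yy)
            = (X 0 ^ xx' * X 1 ^ yy) * (X 0 * (X 0 ^ c * X 1 ^ d) ^ r) := by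
          rw [hxx', mul_pow, ← pow_mul, ← pow_mul]
          ring
        rw [heq]
        exact Ideal.mul_mem_left _ _
          (Ideal.mul_mem_mul (Ideal.subset_span (by simp)) hu2I)
      · obtain ⟨yy', hyy'⟩ := Nat.exists_eq_add_of_le hy1
        have heq : (X 0 : MvPolynomial (Fin 2) K) ^ (c * r + xx) * X 1 ^ (d * r + yy)
            = (X 0 ^ xx * X 1 ^ yy') * (X 1 * (X 0 ^ c * X 1 ^ d) ^ r) := by
          rw [hyy', mul_pow, ← pow_mul, ← pow_mul]
          ring
        rw [heq]
        exact Ideal.mul_mem_left _ _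
          (Ideal.mul_mem_mul (Ideal.subset_span (by simp)) hu2I)
    · rw [if_neg he, map_zero]
      exact Submodule.zero_mem _
  -- span {P, Q} ≤ J
  have hPQJ : Ideal.span {P, Q} ≤ J := by
    rw [Ideal.span_le]
    rintro x hx
    simp only [Set.mem_insert_iff, Set.mem_singleton_iff] at hx
    rcases hx with rfl | rfl
    · exact hPJ
    · exact hQJ
  -- the claims
  have hclaim1 : ∀ σ lam : ℕ, 1 ≤ σ → 1 ≤ lam → c * σ ≤ a * lam →
      b * lam + d * σ ≤ 2 * (b * σ) → l ≤ lam :=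
    fun σ lam h1 h2 h3 h4 => claim1 ha hb hc hbd1 hd2b hkey hl1 hl2 σ lam h1 h2 h3 h4
  have hclaim2 : ∀ σ lam : ℕ, 1 ≤ σ → 1 ≤ lam → c * σ ≤ a * lam →
      b * lam + d * σ ≤ 2 * (b * σ) → lam + 2 * r ≤ 2 * σ + l :=
    fun σ lam h1 h2 h3 h4 => claim2 ha hb hc hbd1 hd2b hkey hl0 hl1 hl2 σ lam h1 h2 h3 h4
  -- J = span {P, Q}
  have hJeq : J = Ideal.span {P, Q} := by
    apply le_antisymm ?_ hPQJ
    intro f hf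
    have hsum := sum_homogeneousComponent f
    rw [← hsum]
    apply Ideal.sum_mem
    intro e _
    have hgmem : aeval u (homogeneousComponent e f) ∈
        Ideal.span {(X 0 : MvPolynomial (Fin 2) K), X 1} *
        (Ideal.span {(X 0 ^ (2*a) : MvPolynomial (Fin 2) K), X 0 ^ a * X 1 ^ b,
          X 0 ^ c * X 1 ^ d, X 1 ^ (2*b)}) ^ e := by
      have := (hJ f).mp hf e
      rwa [hmm, hI, hu0, hu1, hu2, hu3] at this
    have hGJ : ∀ f' : MvPolynomial (Fin 4) K,
        f' ∈ Ideal.span {(X 1 : MvPolynomial (Fin 4) K) ^ 2 - X 0 * X 3,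
          X 0 ^ i * X 1 ^ j * X 3 ^ (r - i - j)} → f'.IsHomogeneous e →
        aeval u f' ∈ Ideal.span {(X 0 : MvPolynomial (Fin 2) K), X 1} *
          (Ideal.span {(X 0 ^ (2*a) : MvPolynomial (Fin 2) K), X 0 ^ a * X 1 ^ b,
            X 0 ^ c * X 1 ^ d, X 1 ^ (2*b)}) ^ e := by
      intro f' hf' hf'hom
      have hmemJ : f' ∈ J := hPQJ hf'
      have := (hJ f').mp hmemJ e
      rw [homogeneousComponent_of_mem (mem_homogeneousSubmodule _ _ |>.mpr hf'hom),
        if_pos rfl] at this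
      rwa [hmm, hI, hu0, hu1, hu2, hu3] at this
    exact reduction a b c d r l i j ha hb hc hkey hclaim1 hclaim2 hij hj1 hijr
      u hu0 hu1 hu2 hu3 e (homogeneousComponent e f)
      (homogeneousComponent_isHomogeneous e f) hGJ hgmem
  exact ⟨hne, l, hl0, hl1, hl2, hijr, hJeq⟩
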